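/- Let (C_n, σ) be a signed cycle on n vertices. Then r(C_n,σ) = n if n is odd, or if n ≡ 0 (mod 4) and σ(C_n) = −1, or if n ≡ 2 (mod 4) and σ(C_n) = +1; and r(C_n,σ) = n − 2 if n ≡ 0 (mod 4) and σ(C_n) = +1, or if n ≡ 2 (mod 4) and σ(C_n) = −1. Here σ(C_n) is the product of the edge signs. -/

import Mathlib

open SimpleGraph
open scoped Classical

noncomputable section

/-- The adjacency matrix of a signed graph `(G, σ)`. -/
def sAdj {V : Type*} [Fintype V] (G : SimpleGraph V) (σ : Sym2 V → ℝ) : Matrix V V ℝ :=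
  fun i j => if G.Adj i j then σ s(i, j) else 0

/-- The rank of a signed graph. -/
def srank {V : Type*} [Fintype V] (G : SimpleGraph V) (σ : Sym2 V → ℝ) : ℕ :=
  (sAdj G σ).rank

/-- The independence number of a graph. -/
def indepNum {V : Type*} (G : SimpleGraph V) : ℕ :=
  sSup {n | ∃ s : Finset V, (∀ a ∈ s, ∀ b ∈ s, ¬ G.Adj a b) ∧ s.card = n}

/-- The matching number of a graph. -/
def matchNum {V : Type*} (G : SimpleGraph V) : ℕ :=
  sSup {n | ∃ M : G.Subgraph, M.IsMatching ∧ M.edgeSet.ncard = n}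

/-- The cyclomatic number `|E| - |V| + ω` of a graph (as a natural number;
the quantity is always nonnegative). -/
def cyclomatic {V : Type*} [Fintype V] (G : SimpleGraph V) : ℕ :=
  G.edgeSet.ncard + Nat.card G.ConnectedComponent - Fintype.card V

/-- Deleting a set of vertices from a graph: the induced subgraph on the complement. -/
def vdel {V : Type*} (G : SimpleGraph V) (S : Set V) : SimpleGraph ↥(Sᶜ) :=
  G.induce Sᶜ

/-- Restriction of a sign function to a set of vertices. -/
def σres {V : Type*} (σ : Sym2 V → ℝ) (s : Set V) : Sym2 s → ℝ :=
  fun e => σ (e.map Subtype.val)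

/-- A signed graph is lower-optimal if `r + 2α = 2n - 2c`. -/
def lowerOptimal {V : Type*} [Fintype V] (G : SimpleGraph V) (σ : Sym2 V → ℝ) : Prop :=
  srank G σ + 2 * _root_.indepNum G + 2 * cyclomatic G = 2 * Fintype.card V

namespace SrankCycleAux

open scoped Fin.CommRing

variable {n : ℕ}

/-- Edge signs indexed by vertices. -/
def eps [NeZero n] (σ : Sym2 (Fin n) → ℝ) : Fin n → ℝ := fun i => σ s(i, i + 1)

/-- The switching gauge. -/
def dd [NeZero n] (σ : Sym2 (Fin n) → ℝ) : ℕ → ℝ :=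
  fun k => ∏ j ∈ Finset.range k, eps σ (j : Fin n)

lemma two_ne [NeZero n] (hn : 3 ≤ n) : (2 : Fin n) ≠ 0 := by
  have h : ((2 : ℕ) : Fin n) ≠ 0 := by
    rw [Ne, Fin.natCast_eq_zero]
    intro h; exact absurd (Nat.le_of_dvd (by norm_num) h) (by omega)
  simpa using h

lemma adj_iff [NeZero n] (hn : 3 ≤ n) (u v : Fin n) :
    (cycleGraph n).Adj u v ↔ u - v = 1 ∨ v - u = 1 := by
  rw [cycleGraph_adj']
  have h1 : ((1 : Fin n) : ℕ) = 1 := by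
    rw [Fin.val_one' n]; exact Nat.mod_eq_of_lt (by omega)
  constructor
  · rintro (h | h) <;> [left; right] <;> exact Fin.ext (by rw [h1]; exact h)
  · rintro (h | h) <;> [left; right] <;> rw [h] <;> exact h1

lemma adj_succ [NeZero n] (hn : 3 ≤ n) (i : Fin n) : (cycleGraph n).Adj i (i + 1) := by
  rw [adj_iff hn]; right; exact add_sub_cancel_left i 1

lemma adj_pred [NeZero n] (hn : 3 ≤ n) (i : Fin n) : (cycleGraph n).Adj i (i - 1) := by
  rw [adj_iff hn]; left; exact sub_sub_cancel i 1

lemma eps_pm [NeZero n] (hn : 3 ≤ n) {σ : Sym2 (Fin n) → ℝ}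
    (hσ : ∀ e ∈ (cycleGraph n).edgeSet, σ e = 1 ∨ σ e = -1) (i : Fin n) :
    eps σ i = 1 ∨ eps σ i = -1 :=
  hσ _ ((cycleGraph n).mem_edgeSet.2 (adj_succ hn i))

lemma eps_sq [NeZero n] (hn : 3 ≤ n) {σ : Sym2 (Fin n) → ℝ}
    (hσ : ∀ e ∈ (cycleGraph n).edgeSet, σ e = 1 ∨ σ e = -1) (i : Fin n) :
    eps σ i * eps σ i = 1 := by
  rcases eps_pm hn hσ i with h | h <;> rw [h] <;> norm_num

lemma ne_pred_succ [NeZero n] (hn : 3 ≤ n) (i : Fin n) : i - 1 ≠ i + 1 := by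
  intro h
  exact two_ne hn (by linear_combination -h)

lemma entry_zero [NeZero n] (hn : 3 ≤ n) (σ : Sym2 (Fin n) → ℝ) {i j : Fin n}
    (h1 : j ≠ i - 1) (h2 : j ≠ i + 1) : sAdj (cycleGraph n) σ i j = 0 := by
  rw [sAdj, if_neg]
  rw [adj_iff hn]
  rintro (h | h)
  · exact h1 (by linear_combination -h)
  · exact h2 (by linear_combination h)

lemma entry_succ [NeZero n] (hn : 3 ≤ n) (σ : Sym2 (Fin n) → ℝ) (i : Fin n) :
    sAdj (cycleGraph n) σ i (i + 1) = eps σ i := by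
  rw [sAdj, if_pos (adj_succ hn i)]; rfl

lemma entry_pred [NeZero n] (hn : 3 ≤ n) (σ : Sym2 (Fin n) → ℝ) (i : Fin n) :
    sAdj (cycleGraph n) σ i (i - 1) = eps σ (i - 1) := by
  rw [sAdj, if_pos (adj_pred hn i)]
  have : s(i, i - 1) = s(i - 1, (i - 1) + 1) := by
    rw [sub_add_cancel]; exact Sym2.eq_swap
  rw [eps, ← this]

lemma mulVec_apply [NeZero n] (hn : 3 ≤ n) (σ : Sym2 (Fin n) → ℝ) (x : Fin n → ℝ) (i : Fin n) :
    (sAdj (cycleGraph n) σ).mulVec x i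
      = eps σ (i - 1) * x (i - 1) + eps σ i * x (i + 1) := by
  have hsub : ∑ j : Fin n, sAdj (cycleGraph n) σ i j * x j
      = ∑ j ∈ ({i - 1, i + 1} : Finset (Fin n)), sAdj (cycleGraph n) σ i j * x j := by
    refine (Finset.sum_subset (Finset.subset_univ _) ?_).symm
    intro j _ hj
    simp only [Finset.mem_insert, Finset.mem_singleton] at hj
    push_neg at hj
    rw [entry_zero hn σ hj.1 hj.2, zero_mul]
  rw [Matrix.mulVec, dotProduct, hsub, Finset.sum_pair (ne_pred_succ hn i),
    entry_succ hn, entry_pred hn]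

lemma mem_ker_iff [NeZero n] (hn : 3 ≤ n) (σ : Sym2 (Fin n) → ℝ) (x : Fin n → ℝ) :
    x ∈ LinearMap.ker (sAdj (cycleGraph n) σ).mulVecLin
      ↔ ∀ i : Fin n, eps σ (i - 1) * x (i - 1) + eps σ i * x (i + 1) = 0 := by
  rw [LinearMap.mem_ker, Matrix.mulVecLin_apply, funext_iff]
  refine forall_congr' fun i => ?_
  rw [mulVec_apply hn σ x i, Pi.zero_apply]

lemma cast_succ_sub_one [NeZero n] (k : ℕ) : ((k + 1 : ℕ) : Fin n) - 1 = (k : Fin n) := by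
  push_cast; ring

lemma cast_succ_add_one [NeZero n] (k : ℕ) : ((k + 1 : ℕ) : Fin n) + 1 = ((k + 2 : ℕ) : Fin n) := by
  push_cast; ring

lemma mem_ker_iff' [NeZero n] (hn : 3 ≤ n) (σ : Sym2 (Fin n) → ℝ) (x : Fin n → ℝ) :
    x ∈ LinearMap.ker (sAdj (cycleGraph n) σ).mulVecLin
      ↔ ∀ k : ℕ, eps σ (k : Fin n) * x (k : Fin n)
          + eps σ ((k + 1 : ℕ) : Fin n) * x ((k + 2 : ℕ) : Fin n) = 0 := by
  rw [mem_ker_iff hn]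
  constructor
  · intro H k
    have h := H ((k + 1 : ℕ) : Fin n)
    rwa [cast_succ_sub_one, cast_succ_add_one] at h
  · intro H i
    have hk : ((i.val + (n - 1) + 1 : ℕ) : Fin n) = i := by
      have : i.val + (n - 1) + 1 = i.val + n := by omega
      rw [this]
      push_cast [Fin.natCast_self]
      simp
    have e0 : ((i.val + (n - 1) : ℕ) : Fin n) = i - 1 := by
      rw [← cast_succ_sub_one, hk]
    have e2 : ((i.val + (n - 1) + 2 : ℕ) : Fin n) = i + 1 := by
      rw [← cast_succ_add_one, hk]
    have h := H (i.val + (n - 1))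
    rwa [e0, hk, e2] at h

lemma dd_succ [NeZero n] (σ : Sym2 (Fin n) → ℝ) (k : ℕ) :
    dd σ (k + 1) = dd σ k * eps σ (k : Fin n) :=
  Finset.prod_range_succ _ k

lemma dd_sq [NeZero n] (hn : 3 ≤ n) {σ : Sym2 (Fin n) → ℝ}
    (hσ : ∀ e ∈ (cycleGraph n).edgeSet, σ e = 1 ∨ σ e = -1) (k : ℕ) :
    dd σ k * dd σ k = 1 := by
  induction k with
  | zero => simp [dd]
  | succ k ih =>
      rw [dd_succ]
      have := eps_sq hn hσ (k : Fin n)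
      nlinarith [ih, this]

lemma prod_shift [NeZero n] (σ : Sym2 (Fin n) → ℝ) (k : ℕ) :
    ∏ j ∈ Finset.range n, eps σ ((k + j : ℕ) : Fin n) = ∏ i : Fin n, eps σ i := by
  rw [← Fin.prod_univ_eq_prod_range (fun j => eps σ ((k + j : ℕ) : Fin n)) n]
  have h : ∀ i : Fin n, eps σ ((k + i.val : ℕ) : Fin n) = eps σ ((k : Fin n) + i) := by
    intro i; congr 1; push_cast [Fin.cast_val_eq_self]; ring
  rw [Fintype.prod_congr _ _ h]
  exact Fintype.prod_bijective (fun i => (k : Fin n) + i)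
    (Equiv.addLeft (k : Fin n)).bijective _ _ (fun i => rfl)

lemma dd_add_n [NeZero n] (σ : Sym2 (Fin n) → ℝ) (k : ℕ) :
    dd σ (k + n) = dd σ k * ∏ i : Fin n, eps σ i := by
  rw [dd, Finset.prod_range_add, ← prod_shift σ k]; rfl

lemma s_sq [NeZero n] (hn : 3 ≤ n) {σ : Sym2 (Fin n) → ℝ}
    (hσ : ∀ e ∈ (cycleGraph n).edgeSet, σ e = 1 ∨ σ e = -1) :
    (∏ i : Fin n, eps σ i) * ∏ i : Fin n, eps σ i = 1 := by
  rw [← Finset.prod_mul_distrib]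
  rw [Finset.prod_congr rfl fun i _ => eps_sq hn hσ i]
  exact Finset.prod_const_one

section KernelVec

variable [NeZero n] {σ : Sym2 (Fin n) → ℝ}

/-- The switched kernel sequence. -/
def vv (σ : Sym2 (Fin n) → ℝ) (x : Fin n → ℝ) : ℕ → ℝ :=
  fun k => dd σ k * x ((k : ℕ) : Fin n)

lemma vv_rec (hn : 3 ≤ n) (hσ : ∀ e ∈ (cycleGraph n).edgeSet, σ e = 1 ∨ σ e = -1) {x : Fin n → ℝ}
    (hx : x ∈ LinearMap.ker (sAdj (cycleGraph n) σ).mulVecLin) (k : ℕ) :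
    vv σ x (k + 2) = -vv σ x k := by
  have h := (mem_ker_iff' hn σ x).1 hx k
  have hsq := eps_sq hn hσ ((k : ℕ) : Fin n)
  have h2 : dd σ (k + 2) = dd σ k * eps σ ((k : ℕ) : Fin n) * eps σ ((k + 1 : ℕ) : Fin n) := by
    rw [show k + 2 = (k + 1) + 1 from rfl, dd_succ, dd_succ]
  rw [vv, vv, h2]
  linear_combination (dd σ k * eps σ ((k : ℕ) : Fin n)) * h
    + (- dd σ k * x ((k : ℕ) : Fin n)) * hsq

lemma vv_iter (hn : 3 ≤ n) (hσ : ∀ e ∈ (cycleGraph n).edgeSet, σ e = 1 ∨ σ e = -1) {x : Fin n → ℝ}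
    (hx : x ∈ LinearMap.ker (sAdj (cycleGraph n) σ).mulVecLin) (m k : ℕ) :
    vv σ x (k + 2 * m) = (-1) ^ m * vv σ x k := by
  induction m generalizing k with
  | zero => simp
  | succ m ih =>
      have : k + 2 * (m + 1) = (k + 2) + 2 * m := by omega
      rw [this, ih (k + 2), vv_rec hn hσ hx k, pow_succ]
      ring

lemma vv_per (x : Fin n → ℝ) (k : ℕ) :
    vv σ x (k + n) = (∏ i : Fin n, eps σ i) * vv σ x k := by
  rw [vv, vv, dd_add_n]
  have : (((k + n : ℕ)) : Fin n) = ((k : ℕ) : Fin n) := by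
    push_cast [Fin.natCast_self]; ring
  rw [this]; ring

lemma x_eq_zero (hn : 3 ≤ n) (hσ' : ∀ e ∈ (cycleGraph n).edgeSet, σ e = 1 ∨ σ e = -1)
    {x : Fin n → ℝ} (hv : ∀ k, vv σ x k = 0) : x = 0 := by
  funext i
  have h := hv i.val
  rw [vv] at h
  have hd := dd_sq hn hσ' i.val
  have : x ((i.val : ℕ) : Fin n) = 0 := by
    rcases mul_eq_zero.1 h with h' | h'
    · rw [h'] at hd; norm_num at hd
    · exact h'
  rwa [Fin.cast_val_eq_self] at this

lemma ker_eq_bot_odd (hn : 3 ≤ n) (hσ : ∀ e ∈ (cycleGraph n).edgeSet, σ e = 1 ∨ σ e = -1) (hodd : Odd n) :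
    LinearMap.ker (sAdj (cycleGraph n) σ).mulVecLin = ⊥ := by
  rw [LinearMap.ker_eq_bot']
  intro x hx
  have hx' : x ∈ LinearMap.ker (sAdj (cycleGraph n) σ).mulVecLin := hx
  refine x_eq_zero hn hσ (fun k => ?_)
  have h1 : vv σ x (k + 2 * n) = -vv σ x k := by
    rw [vv_iter hn hσ hx', hodd.neg_one_pow]; ring
  have h2 : vv σ x (k + 2 * n) = vv σ x k := by
    have : k + 2 * n = (k + n) + n := by omega
    rw [this, vv_per, vv_per]
    linear_combination (vv σ x k) * s_sq hn hσ
  linarith [h1, h2]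

lemma ker_eq_bot_even (hn : 3 ≤ n) (hσ : ∀ e ∈ (cycleGraph n).edgeSet, σ e = 1 ∨ σ e = -1) {m : ℕ} (hm : n = 2 * m)
    (hs : (∏ i : Fin n, eps σ i) ≠ (-1 : ℝ) ^ m) :
    LinearMap.ker (sAdj (cycleGraph n) σ).mulVecLin = ⊥ := by
  rw [LinearMap.ker_eq_bot']
  intro x hx
  have hx' : x ∈ LinearMap.ker (sAdj (cycleGraph n) σ).mulVecLin := hx
  refine x_eq_zero hn hσ (fun k => ?_)
  have h1 : vv σ x (k + n) = (-1) ^ m * vv σ x k := by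
    have hkn : k + n = k + 2 * m := by omega
    rw [hkn, vv_iter hn hσ hx']
  have h2 : vv σ x (k + n) = (∏ i : Fin n, eps σ i) * vv σ x k := vv_per x k
  have hs1 : (∏ i : Fin n, eps σ i) = 1 ∨ (∏ i : Fin n, eps σ i) = -1 := by
    refine Finset.prod_induction _ (fun t => t = 1 ∨ t = -1) ?_ (by norm_num) ?_
    · rintro a b (ha | ha) (hb | hb) <;> rw [ha, hb] <;> norm_num
    · intro i _; exact eps_pm hn hσ i
  have hm1 : ((-1 : ℝ)) ^ m = 1 ∨ ((-1 : ℝ)) ^ m = -1 := by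
    rcases Nat.even_or_odd m with h | h
    · left; exact h.neg_one_pow
    · right; exact h.neg_one_pow
  have hcoef : (∏ i : Fin n, eps σ i) - (-1 : ℝ) ^ m ≠ 0 := by
    rcases hs1 with h' | h' <;> rcases hm1 with h'' | h''
    · exact absurd (h'.trans h''.symm) hs
    · rw [h', h'']; norm_num
    · rw [h', h'']; norm_num
    · exact absurd (h'.trans h''.symm) hs
  have : ((∏ i : Fin n, eps σ i) - (-1 : ℝ) ^ m) * vv σ x k = 0 := by
    linarith [h1, h2]
  rcases mul_eq_zero.1 this with h' | h'
  · exact absurd h' hcoef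
  · exact h'

end KernelVec

section Degenerate

variable [NeZero n] {σ : Sym2 (Fin n) → ℝ}

/-- The period-4 pattern. -/
def ww (a b : ℝ) : ℕ → ℝ := fun k => (-1) ^ (k / 2) * (if k % 2 = 0 then a else b)

lemma ww_rec (a b : ℝ) (k : ℕ) : ww a b (k + 2) = -(ww a b k) := by
  rw [ww, ww]
  have h1 : (k + 2) / 2 = k / 2 + 1 := by omega
  have h2 : (k + 2) % 2 = k % 2 := by omega
  rw [h1, h2, pow_succ]; ring

lemma ww_iter (a b : ℝ) (t k : ℕ) : ww a b (k + 2 * t) = (-1) ^ t * ww a b k := by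
  induction t generalizing k with
  | zero => simp
  | succ t ih =>
      have : k + 2 * (t + 1) = (k + 2) + 2 * t := by omega
      rw [this, ih (k + 2), ww_rec, pow_succ]; ring

/-- The candidate kernel vector. -/
def yy (σ : Sym2 (Fin n) → ℝ) (a b : ℝ) : Fin n → ℝ :=
  fun i => dd σ i.val * ww a b i.val

lemma neg_one_pow_sq (m : ℕ) : ((-1 : ℝ) ^ m) * ((-1 : ℝ) ^ m) = 1 := by
  rw [← pow_add]
  exact Even.neg_one_pow ⟨m, rfl⟩

lemma g_per {m : ℕ} (hm : n = 2 * m) (hdeg : ∏ i : Fin n, eps σ i = (-1 : ℝ) ^ m)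
    (a b : ℝ) (k : ℕ) :
    dd σ (k + n) * ww a b (k + n) = dd σ k * ww a b k := by
  have h1 : k + n = k + 2 * m := by omega
  rw [dd_add_n, hdeg, h1, ww_iter]
  have := neg_one_pow_sq m
  linear_combination (dd σ k * ww a b k) * this

lemma g_mod {m : ℕ} (hm : n = 2 * m) (hdeg : ∏ i : Fin n, eps σ i = (-1 : ℝ) ^ m)
    (a b : ℝ) (k : ℕ) :
    dd σ (k % n) * ww a b (k % n) = dd σ k * ww a b k := by
  have key : ∀ q r : ℕ, dd σ (r + n * q) * ww a b (r + n * q) = dd σ r * ww a b r := by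
    intro q
    induction q with
    | zero => intro r; simp
    | succ q ih =>
        intro r
        have : r + n * (q + 1) = (r + n * q) + n := by ring
        rw [this, g_per hm hdeg, ih]
  have hk : k = k % n + n * (k / n) := (Nat.mod_add_div k n).symm
  conv_rhs => rw [hk]
  rw [key]

lemma yy_cast {m : ℕ} (hm : n = 2 * m) (hdeg : ∏ i : Fin n, eps σ i = (-1 : ℝ) ^ m)
    (a b : ℝ) (k : ℕ) :
    yy σ a b ((k : ℕ) : Fin n) = dd σ k * ww a b k := by
  rw [yy, Fin.val_natCast, g_mod hm hdeg]

lemma yy_mem (hn : 3 ≤ n) (hσ : ∀ e ∈ (cycleGraph n).edgeSet, σ e = 1 ∨ σ e = -1)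
    {m : ℕ} (hm : n = 2 * m) (hdeg : ∏ i : Fin n, eps σ i = (-1 : ℝ) ^ m) (a b : ℝ) :
    yy σ a b ∈ LinearMap.ker (sAdj (cycleGraph n) σ).mulVecLin := by
  rw [mem_ker_iff' hn]
  intro k
  rw [yy_cast hm hdeg, yy_cast hm hdeg, ww_rec,
    show k + 2 = (k + 1) + 1 from rfl, dd_succ, dd_succ]
  have hsq := eps_sq hn hσ (((k + 1 : ℕ)) : Fin n)
  linear_combination (- eps σ ((k : ℕ) : Fin n) * dd σ k * ww a b k) * hsq

lemma ker_finrank_two (hn : 3 ≤ n) (hσ : ∀ e ∈ (cycleGraph n).edgeSet, σ e = 1 ∨ σ e = -1)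
    {m : ℕ} (hm : n = 2 * m) (hdeg : ∏ i : Fin n, eps σ i = (-1 : ℝ) ^ m) :
    Module.finrank ℝ (LinearMap.ker (sAdj (cycleGraph n) σ).mulVecLin) = 2 := by
  set K := LinearMap.ker (sAdj (cycleGraph n) σ).mulVecLin with hK
  let L : (Fin n → ℝ) →ₗ[ℝ] ℝ × ℝ :=
    (LinearMap.proj (0 : Fin n)).prod (LinearMap.proj (1 : Fin n))
  let φ : K →ₗ[ℝ] ℝ × ℝ := L.comp K.subtype
  have hval1 : ((1 : Fin n) : ℕ) = 1 := by
    rw [Fin.val_one' n]; exact Nat.mod_eq_of_lt (by omega)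
  have hφ : ∀ z : K, φ z = ((z : Fin n → ℝ) 0, (z : Fin n → ℝ) 1) := fun z => rfl
  have hinj : Function.Injective φ := by
    rw [← LinearMap.ker_eq_bot, LinearMap.ker_eq_bot']
    rintro ⟨x, hx⟩ hz
    rw [hφ] at hz
    have h0 : x 0 = 0 := congrArg Prod.fst hz
    have h1 : x 1 = 0 := congrArg Prod.snd hz
    have hv0 : vv σ x 0 = 0 := by
      rw [vv]; simp [dd, h0]
    have hv1 : vv σ x 1 = 0 := by
      rw [vv, dd_succ]
      have : ((1 : ℕ) : Fin n) = (1 : Fin n) := Nat.cast_one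
      rw [this, h1]; ring
    have hvk : ∀ k, vv σ x k = 0 := by
      intro k
      have hk : k = k % 2 + 2 * (k / 2) := by omega
      have := vv_iter hn hσ hx (k / 2) (k % 2)
      rw [← hk] at this
      rcases Nat.mod_two_eq_zero_or_one k with h | h <;> rw [h] at this <;>
        rw [this] <;> [rw [hv0]; rw [hv1]] <;> ring
    have : x = 0 := x_eq_zero hn hσ hvk
    exact Subtype.ext this
  have hsurj : Function.Surjective φ := by
    rintro ⟨a, b⟩
    refine ⟨⟨yy σ a (eps σ 0 * b), yy_mem hn hσ hm hdeg a _⟩, ?_⟩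
    rw [hφ]
    have hy0 : yy σ a (eps σ 0 * b) 0 = a := by
      rw [yy]
      simp [dd, ww, Fin.val_zero]
    have hy1 : yy σ a (eps σ 0 * b) 1 = b := by
      have hd1 : dd σ 1 = eps σ 0 := by
        rw [show (1 : ℕ) = 0 + 1 from rfl, dd_succ]
        simp [dd]
      have hw1 : ww a (eps σ 0 * b) 1 = eps σ 0 * b := by simp [ww]
      rw [yy, hval1, hd1, hw1]
      linear_combination b * eps_sq hn hσ (0 : Fin n)
    show (yy σ a (eps σ 0 * b) 0, yy σ a (eps σ 0 * b) 1) = (a, b)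
    rw [hy0, hy1]
  have heq := LinearEquiv.finrank_eq (LinearEquiv.ofBijective φ ⟨hinj, hsurj⟩)
  rw [heq]
  simp [Module.finrank_prod]

end Degenerate

lemma rank_add_finrank_ker [NeZero n] (σ : Sym2 (Fin n) → ℝ) :
    (sAdj (cycleGraph n) σ).rank
      + Module.finrank ℝ (LinearMap.ker (sAdj (cycleGraph n) σ).mulVecLin) = n := by
  rw [Matrix.rank, LinearMap.finrank_range_add_finrank_ker,
    Module.finrank_fintype_fun_eq_card, Fintype.card_fin]

lemma edge_image [NeZero n] (hn : 3 ≤ n) :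
    (cycleGraph n).edgeSet.toFinset
      = Finset.image (fun i : Fin n => s(i, i + 1)) Finset.univ := by
  ext e
  induction e with
  | _ a b =>
    simp only [Set.mem_toFinset, mem_edgeSet, Finset.mem_image, Finset.mem_univ, true_and]
    rw [adj_iff hn]
    constructor
    · rintro (h | h)
      · exact ⟨b, by rw [show b + 1 = a from by linear_combination -h]; exact Sym2.eq_swap⟩
      · exact ⟨a, by rw [show a + 1 = b from by linear_combination -h]⟩
    · rintro ⟨i, hi⟩
      rw [Sym2.eq_iff] at hi
      rcases hi with ⟨h1, h2⟩ | ⟨h1, h2⟩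
      · right; rw [← h1, ← h2]; exact add_sub_cancel_left i 1
      · left; rw [← h1, ← h2]; exact add_sub_cancel_left i 1

lemma prod_edges [NeZero n] (hn : 3 ≤ n) (σ : Sym2 (Fin n) → ℝ) :
    ∏ e ∈ (cycleGraph n).edgeSet.toFinset, σ e = ∏ i : Fin n, eps σ i := by
  rw [edge_image hn, Finset.prod_image]
  · rfl
  · intro i _ j _ h
    rw [Sym2.eq_iff] at h
    rcases h with ⟨h1, h2⟩ | ⟨h1, h2⟩
    · exact h1
    · exfalso; exact two_ne hn (by linear_combination h2 - h1)

end SrankCycleAux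

theorem srank_cycle {n : ℕ} (hn : 3 ≤ n) (σ : Sym2 (Fin n) → ℝ)
    (hσ : ∀ e ∈ (cycleGraph n).edgeSet, σ e = 1 ∨ σ e = -1) :
    (Odd n → srank (cycleGraph n) σ = n) ∧
    (n % 4 = 0 → ∏ e ∈ (cycleGraph n).edgeSet.toFinset, σ e = -1 →
      srank (cycleGraph n) σ = n) ∧
    (n % 4 = 2 → ∏ e ∈ (cycleGraph n).edgeSet.toFinset, σ e = 1 →
      srank (cycleGraph n) σ = n) ∧
    (n % 4 = 0 → ∏ e ∈ (cycleGraph n).edgeSet.toFinset, σ e = 1 →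
      srank (cycleGraph n) σ = n - 2) ∧
    (n % 4 = 2 → ∏ e ∈ (cycleGraph n).edgeSet.toFinset, σ e = -1 →
      srank (cycleGraph n) σ = n - 2) := by
  haveI : NeZero n := ⟨by omega⟩
  have hrk := SrankCycleAux.rank_add_finrank_ker (n := n) σ
  refine ⟨?_, ?_, ?_, ?_, ?_⟩
  · intro hodd
    have hker := SrankCycleAux.ker_eq_bot_odd hn hσ hodd
    show (sAdj (cycleGraph n) σ).rank = n
    rw [hker, finrank_bot] at hrk
    omega
  · intro h4 hprod
    have hs : ∏ i : Fin n, SrankCycleAux.eps σ i = -1 := by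
      rw [← SrankCycleAux.prod_edges hn σ]; exact hprod
    have hm2 : n = 2 * (n / 2) := by omega
    have hmeven : Even (n / 2) := Nat.even_iff.mpr (by omega)
    have hker := SrankCycleAux.ker_eq_bot_even hn hσ hm2
      (by rw [hs, hmeven.neg_one_pow]; norm_num)
    show (sAdj (cycleGraph n) σ).rank = n
    rw [hker, finrank_bot] at hrk
    omega
  · intro h4 hprod
    have hs : ∏ i : Fin n, SrankCycleAux.eps σ i = 1 := by
      rw [← SrankCycleAux.prod_edges hn σ]; exact hprod
    have hm2 : n = 2 * (n / 2) := by omega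
    have hmodd : Odd (n / 2) := Nat.odd_iff.mpr (by omega)
    have hker := SrankCycleAux.ker_eq_bot_even hn hσ hm2
      (by rw [hs, hmodd.neg_one_pow]; norm_num)
    show (sAdj (cycleGraph n) σ).rank = n
    rw [hker, finrank_bot] at hrk
    omega
  · intro h4 hprod
    have hmeven : Even (n / 2) := Nat.even_iff.mpr (by omega)
    have hs : ∏ i : Fin n, SrankCycleAux.eps σ i = (-1 : ℝ) ^ (n / 2) := by
      rw [← SrankCycleAux.prod_edges hn σ, hmeven.neg_one_pow]; exact hprod
    have h2 := SrankCycleAux.ker_finrank_two hn hσ (by omega : n = 2 * (n / 2)) hs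
    show (sAdj (cycleGraph n) σ).rank = n - 2
    rw [h2] at hrk
    omega
  · intro h4 hprod
    have hmodd : Odd (n / 2) := Nat.odd_iff.mpr (by omega)
    have hs : ∏ i : Fin n, SrankCycleAux.eps σ i = (-1 : ℝ) ^ (n / 2) := by
      rw [← SrankCycleAux.prod_edges hn σ, hmodd.neg_one_pow]; exact hprod
    have h2 := SrankCycleAux.ker_finrank_two hn hσ (by omega : n = 2 * (n / 2)) hs
    show (sAdj (cycleGraph n) σ).rank = n - 2
    rw [h2] at hrk
    omega
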